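/- If there exists a Z/pZ-covering family of N vectors in (Z/pZ)^ℓ, then the graph consisting of N disjoint cliques each of size p has product dimension at most ℓ; that is, there exist ℓ proper vertex colorings (each with p colors) such that any two non-adjacent vertices share a color in at least one of the colorings. -/
import Mathlib

/-- A `ZMod p`-covering family of `N` vectors in `(ZMod p)^ℓ` gives `ℓ` proper colorings
of the graph of `N` disjoint `p`-cliques (vertices `Fin N × ZMod p`, adjacency: same
clique and distinct) such that any two non-adjacent vertices share a color somewhere. -/
theorem stmt3 (p ℓ N : ℕ) (hp : p.Prime) (F : Fin N → Fin ℓ → ZMod p)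
    (hinj : Function.Injective F)
    (hcov : ∀ j j' : Fin N, j ≠ j' → ∀ s : ZMod p, ∃ i, F j i - F j' i = s) :
    ∃ c : Fin ℓ → (Fin N × ZMod p) → ZMod p,
      (∀ k, ∀ u v : Fin N × ZMod p, u.1 = v.1 → u ≠ v → c k u ≠ c k v) ∧
      (∀ u v : Fin N × ZMod p, u ≠ v → u.1 ≠ v.1 → ∃ k, c k u = c k v) := by
  refine ⟨fun k x => F x.1 k + x.2, ?_, ?_⟩
  · rintro k ⟨j, i⟩ ⟨j', i'⟩ h hne heq
    simp only at h heq
    subst h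
    exact hne (Prod.ext rfl (add_left_cancel heq))
  · rintro ⟨j, i⟩ ⟨j', i'⟩ _ hne
    obtain ⟨k, hk⟩ := hcov j' j (fun h => hne h.symm) (i - i')
    exact ⟨k, by simp only; linear_combination -hk⟩
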